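/- Let m ∈ ℕ and let 𝓛 be the set of upward closed subsets of ℕ₀ᵐ, partially ordered by inclusion. Then (𝓛, ⊆) has no infinite antichain and no infinite strictly ascending chain. -/

import Mathlib

/-- An operation sequence on a lattice `L`: `f n` is the `(n+1)`-ary operation,
so `f n` corresponds to the paper's `f_{n+1}`. -/
def OpSeq (L : Type) : Type := ∀ n : ℕ, (Fin (n + 1) → L) → L

/-- Admissibility: (HC1), (HC2), (HC3), (HC4), (HC7), (HC8). -/
def IsAdmissible {L : Type} [CompleteLattice L] (f : OpSeq L) : Prop :=
  -- (HC1)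
  (∀ n (α : Fin (n + 1) → L) (k : Fin (n + 1)), f n α ≤ α k) ∧
  -- (HC2) monotonicity
  (∀ n (α β : Fin (n + 1) → L), α ≤ β → f n α ≤ f n β) ∧
  -- (HC3)
  (∀ n (α : Fin (n + 2) → L), f (n + 1) α ≤ f n (fun i => α i.succ)) ∧
  -- (HC4) symmetry
  (∀ n (α : Fin (n + 1) → L) (π : Equiv.Perm (Fin (n + 1))), f n (α ∘ π) = f n α) ∧
  -- (HC7) join distributivity in each argument
  (∀ n (i : Fin (n + 1)) (α : Fin (n + 1) → L) (S : Set L),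
      f n (Function.update α i (sSup S)) = ⨆ b ∈ S, f n (Function.update α i b)) ∧
  -- (HC8)
  (∀ n k (hkn : k ≤ n) (α : Fin (n + 1) → L),
      f k (fun i : Fin (k + 1) =>
        if hi : (i : ℕ) < k then α ⟨i.1, by omega⟩
        else f (n - k) (fun j : Fin (n - k + 1) => α ⟨k + j.1, by have := j.2; omega⟩)) ≤
      f n α)

/-- `(δ, ε)` is a splitting pair. -/
def IsSplittingPair {L : Type} [Lattice L] [BoundedOrder L] (δ ε : L) : Prop :=
  δ < ⊤ ∧ ⊥ < ε ∧ ∀ α : L, ε ≤ α ∨ α ≤ δ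

/-- `L` splits. -/
def Splits (L : Type) [Lattice L] [BoundedOrder L] : Prop :=
  ∃ δ ε : L, IsSplittingPair δ ε

/-- `L` splits strongly. -/
def SplitsStrongly (L : Type) [Lattice L] [BoundedOrder L] : Prop :=
  ∃ δ ε : L, IsSplittingPair δ ε ∧ ε ≤ δ

section UpperPWO

open Set

/-- Upper sets of `β`, partially well ordered under reverse inclusion. -/
def UpperPWO (β : Type*) [Preorder β] : Prop :=
  Set.PartiallyWellOrderedOn {U : Set β | IsUpperSet U} (fun U V => V ⊆ U)

theorem upperPWO_of_subsingleton (β : Type*) [Preorder β] [Subsingleton β] :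
    UpperPWO β := by
  refine Set.partiallyWellOrderedOn_iff_exists_lt.2 fun f _ => ?_
  by_cases h1 : f 1 ⊆ f 0
  · exact ⟨0, 1, Nat.zero_lt_one, h1⟩
  by_cases h2 : f 2 ⊆ f 1
  · exact ⟨1, 2, Nat.one_lt_two, h2⟩
  exfalso
  obtain ⟨x, hx1, _⟩ := Set.not_subset.1 h1
  obtain ⟨y, _, hy1⟩ := Set.not_subset.1 h2
  exact hy1 (Subsingleton.elim x y ▸ hx1)

/-- Ascending chain condition from `UpperPWO`. -/
theorem upperPWO_stab {β : Type*} [Preorder β] (h : UpperPWO β)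
    (g : ℕ → Set β) (hup : ∀ n, IsUpperSet (g n)) (hmono : Monotone g) :
    ∃ N, ∀ k, N ≤ k → g k = g N := by
  by_contra hcon
  push_neg at hcon
  choose w hw1 hw2 using hcon
  let φ : ℕ → ℕ := fun n => Nat.rec 0 (fun _ x => w x) n
  have hφ : ∀ n, g (φ n) ⊂ g (φ (n + 1)) := by
    intro n
    exact ssubset_of_subset_of_ne (hmono (hw1 (φ n))) (fun he => hw2 (φ n) he.symm)
  have hsm : StrictMono (fun n => g (φ n)) := strictMono_nat_of_lt_succ hφ
  obtain ⟨a, b, hab, hsub⟩ := Set.PartiallyWellOrderedOn.exists_lt h (f := fun n => g (φ n)) (fun n => hup (φ n))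
  exact absurd hsub (hsm hab).not_ge
  -- note: hsub : g (φ b) ⊆ g (φ a); hsm hab : g (φ a) < g (φ b)

namespace UpperPWOProof

variable {β : Type*} [Preorder β]

/-- The `k`-th slice of a subset of `β × ℕ`. -/
def slice (U : Set (β × ℕ)) (k : ℕ) : Set β := {b | (b, k) ∈ U}

/-- Shift in the `ℕ` coordinate. -/
def shiftSet (U : Set (β × ℕ)) : Set (β × ℕ) := {p | (p.1, p.2 + 1) ∈ U}

theorem isUpperSet_slice {U : Set (β × ℕ)} (hU : IsUpperSet U) (k : ℕ) :
    IsUpperSet (slice U k) := fun a b hab ha => hU (Prod.mk_le_mk.2 ⟨hab, le_rfl⟩) ha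

theorem slice_mono {U : Set (β × ℕ)} (hU : IsUpperSet U) : Monotone (slice U) := by
  intro k l hkl b hb
  exact hU (Prod.mk_le_mk.2 ⟨le_rfl, hkl⟩) hb

theorem isUpperSet_shiftSet {U : Set (β × ℕ)} (hU : IsUpperSet U) :
    IsUpperSet (shiftSet U) := fun a b hab ha =>
  hU (Prod.mk_le_mk.2 ⟨hab.1, Nat.succ_le_succ hab.2⟩) ha

theorem subset_shiftSet {U : Set (β × ℕ)} (hU : IsUpperSet U) : U ⊆ shiftSet U := by
  rintro ⟨b, k⟩ hb
  exact hU (Prod.mk_le_mk.2 ⟨le_rfl, Nat.le_succ k⟩) hb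

theorem slice_shiftSet (U : Set (β × ℕ)) (k : ℕ) : slice (shiftSet U) k = slice U (k + 1) := rfl

/-- reconstruction of inclusion from slice-0 and shift. -/
theorem subset_of_slice_shift {U V : Set (β × ℕ)}
    (h0 : slice V 0 ⊆ slice U 0) (hs : shiftSet V ⊆ shiftSet U) : V ⊆ U := by
  rintro ⟨b, k⟩ hb
  cases k with
  | zero => exact h0 hb
  | succ k => exact hs (show (b, k) ∈ shiftSet V from hb)

open Classical in
/-- Stabilization rank of the slices. -/
noncomputable def rk (U : Set (β × ℕ)) : ℕ :=
  if h : ∃ N, ∀ k, N ≤ k → slice U k = slice U N then Nat.find h else 0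

theorem rk_exists (h : UpperPWO β) {U : Set (β × ℕ)} (hU : IsUpperSet U) :
    ∃ N, ∀ k, N ≤ k → slice U k = slice U N :=
  upperPWO_stab h (slice U) (isUpperSet_slice hU) (slice_mono hU)

theorem rk_spec (h : UpperPWO β) {U : Set (β × ℕ)} (hU : IsUpperSet U) :
    ∀ k, rk U ≤ k → slice U k = slice U (rk U) := by
  classical
  have hex := rk_exists h hU
  rw [rk, dif_pos hex]
  exact Nat.find_spec hex

theorem slice_const_of_rk_zero (h : UpperPWO β) {U : Set (β × ℕ)} (hU : IsUpperSet U)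
    (h0 : rk U = 0) (k : ℕ) : slice U k = slice U 0 := by
  have := rk_spec h hU k (by omega)
  rwa [h0] at this

theorem rk_shiftSet_lt (h : UpperPWO β) {U : Set (β × ℕ)} (hU : IsUpperSet U)
    (hpos : 0 < rk U) : rk (shiftSet U) < rk U := by
  classical
  have hexS := rk_exists h (isUpperSet_shiftSet hU)
  have hP : ∀ k, rk U - 1 ≤ k → slice (shiftSet U) k = slice (shiftSet U) (rk U - 1) := by
    intro k hk
    rw [slice_shiftSet, slice_shiftSet]
    rw [rk_spec h hU (k + 1) (by omega), rk_spec h hU (rk U - 1 + 1) (by omega)]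
  have : rk (shiftSet U) ≤ rk U - 1 := by
    rw [rk, dif_pos hexS]
    exact Nat.find_min' hexS hP
  omega

/-- If `rk U = 0` and the zero slices are included, then the sets are included. -/
theorem subset_of_rk_zero (h : UpperPWO β) {U V : Set (β × ℕ)}
    (hU : IsUpperSet U) (hV : IsUpperSet V) (hU0 : rk U = 0) (hV0 : rk V = 0)
    (hsub : slice V 0 ⊆ slice U 0) : V ⊆ U := by
  rintro ⟨b, k⟩ hb
  have hbV : b ∈ slice V k := hb
  rw [slice_const_of_rk_zero h hV hV0 k] at hbV
  have : b ∈ slice U 0 := hsub hbV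
  rw [← slice_const_of_rk_zero h hU hU0 k] at this
  exact this

end UpperPWOProof

open UpperPWOProof Set.PartiallyWellOrderedOn in
theorem upperPWO_prod_nat {β : Type*} [Preorder β] (h : UpperPWO β) :
    UpperPWO (β × ℕ) := by
  classical
  rw [UpperPWO, iff_not_exists_isMinBadSeq rk]
  rintro ⟨f, ⟨hmem, hbad⟩, hmin⟩
  simp only [Set.mem_setOf_eq] at hmem
  -- Case A : infinitely many positions have rank zero
  by_cases hA : {n | rk (f n) = 0}.Infinite
  · -- build strictly monotone enumeration of that set
    have hgt := hA.exists_gt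
    let e : ℕ → ℕ := fun n => Nat.rec (Classical.choose hA.nonempty) (fun _ x => Classical.choose (hgt x)) n
    have he0 : rk (f (e 0)) = 0 := Classical.choose_spec hA.nonempty
    have hestep : ∀ n, rk (f (e (n + 1))) = 0 ∧ e n < e (n + 1) := by
      intro n
      exact ⟨(Classical.choose_spec (hgt (e n))).1, (Classical.choose_spec (hgt (e n))).2⟩
    have heA : ∀ n, rk (f (e n)) = 0 := by
      intro n; cases n with
      | zero => exact he0
      | succ n => exact (hestep n).1
    have hesm : StrictMono e := strictMono_nat_of_lt_succ (fun n => (hestep n).2)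
    obtain ⟨a, b, hab, hsub⟩ := Set.PartiallyWellOrderedOn.exists_lt h (f := fun n => slice (f (e n)) 0)
      (fun n => isUpperSet_slice (hmem (e n)) 0)
    exact hbad (e a) (e b) (hesm hab)
      (subset_of_rk_zero h (hmem (e a)) (hmem (e b)) (heA a) (heA b) hsub)
  · -- Case B : ranks are eventually positive
    have hAfin : {n | rk (f n) = 0}.Finite := Set.not_infinite.1 hA
    obtain ⟨n₀, hn₀⟩ : ∃ n₀, ∀ n, n₀ ≤ n → 0 < rk (f n) := by
      rcases hAfin.bddAbove with ⟨M, hM⟩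
      exact ⟨M + 1, fun n hn => Nat.pos_of_ne_zero (fun hz => by
        have := hM hz; omega)⟩
    letI : IsRefl (Set β) (fun U V => V ⊆ U) := ⟨fun _ => le_rfl⟩
    letI : IsTrans (Set β) (fun U V => V ⊆ U) := ⟨fun _ _ _ h1 h2 => h2.trans h1⟩
    obtain ⟨g, hg⟩ := h.exists_monotone_subseq (f := fun n => slice (f (n₀ + n)) 0)
      (fun n => isUpperSet_slice (hmem (n₀ + n)) 0)
    set G : ℕ → ℕ := fun n => n₀ + g n with hG
    have hGsm : StrictMono G := fun a b hab => by
      simp only [hG]; exact Nat.add_lt_add_left (g.strictMono hab) n₀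
    -- the combined sequence
    set f' : ℕ → Set (β × ℕ) := fun n =>
      if n < G 0 then f n else shiftSet (f (G (n - G 0))) with hf'
    have hf'lt : ∀ n, n < G 0 → f' n = f n := fun n hn => if_pos hn
    have hf'ge : ∀ n, G 0 ≤ n → f' n = shiftSet (f (G (n - G 0))) := fun n hn =>
      if_neg (by omega)
    have hne : ¬ IsBadSeq (fun U V => V ⊆ U) {U : Set (β × ℕ) | IsUpperSet U} f' := by
      apply hmin (G 0) f' (fun m hm => (hf'lt m hm).symm)
      rw [hf'ge (G 0) le_rfl]
      simp only [Nat.sub_self]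
      exact rk_shiftSet_lt h (hmem (G 0)) (hn₀ (G 0) (Nat.le_add_right _ _))
    rw [IsBadSeq] at hne
    push_neg at hne
    have hmem' : ∀ n, f' n ∈ {U : Set (β × ℕ) | IsUpperSet U} := by
      intro n
      by_cases hn : n < G 0
      · rw [hf'lt n hn]; exact hmem n
      · rw [hf'ge n (by omega)]; exact isUpperSet_shiftSet (hmem _)
    obtain ⟨a, b, hab, hsub⟩ := hne hmem'
    rcases lt_or_ge b (G 0) with hb | hb
    · -- both in prefix
      rw [hf'lt a (hab.trans hb), hf'lt b hb] at hsub
      exact hbad a b hab hsub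
    rcases lt_or_ge a (G 0) with ha | ha
    · -- a in prefix, b in tail
      rw [hf'lt a ha, hf'ge b hb] at hsub
      have : f (G (b - G 0)) ⊆ f a :=
        (subset_shiftSet (hmem (G (b - G 0)))).trans hsub
      exact hbad a (G (b - G 0)) (ha.trans_le (hGsm.monotone (Nat.zero_le _))) this
    · -- both in tail
      rw [hf'ge a ha, hf'ge b hb] at hsub
      have hslice : slice (f (G (b - G 0))) 0 ⊆ slice (f (G (a - G 0))) 0 := by
        have := hg (a - G 0) (b - G 0) (by omega)
        simpa [hG] using this
      have : f (G (b - G 0)) ⊆ f (G (a - G 0)) :=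
        subset_of_slice_shift hslice hsub
      exact hbad (G (a - G 0)) (G (b - G 0)) (hGsm (by omega)) this

end UpperPWO

theorem upperPWO_of_orderIso {γ δ : Type*} [Preorder γ] [Preorder δ] (e : γ ≃o δ)
    (h : UpperPWO δ) : UpperPWO γ := by
  refine Set.partiallyWellOrderedOn_iff_exists_lt.2 fun f hf => ?_
  obtain ⟨a, b, hab, hsub⟩ := Set.PartiallyWellOrderedOn.exists_lt h (f := fun n => e '' f n)
    (fun n => (hf n).image e)
  refine ⟨a, b, hab, fun x hx => ?_⟩
  have := hsub ⟨x, hx, rfl⟩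
  obtain ⟨y, hy, hye⟩ := this
  rwa [← e.injective hye]

def finSuccOrderIso (m : ℕ) : (Fin (m + 1) → ℕ) ≃o (Fin m → ℕ) × ℕ where
  toFun f := (fun i => f i.succ, f 0)
  invFun p := Fin.cons p.2 p.1
  left_inv f := by
    ext i
    refine Fin.cases rfl (fun j => rfl) i
  right_inv p := rfl
  map_rel_iff' := by
    intro f g
    constructor
    · rintro ⟨h1, h2⟩ i
      refine Fin.cases h2 (fun j => h1 j) i
    · intro hfg
      exact ⟨fun i => hfg i.succ, hfg 0⟩

theorem upperPWO_pi : ∀ m : ℕ, UpperPWO (Fin m → ℕ) := by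
  intro m
  induction m with
  | zero => exact upperPWO_of_subsingleton _
  | succ m ih => exact upperPWO_of_orderIso (finSuccOrderIso m) (upperPWO_prod_nat ih)

theorem upperSets_no_infinite_antichain_no_infinite_ascending_chain (m : ℕ) :
    (∀ C : Set (Set (Fin m → ℕ)), (∀ U ∈ C, IsUpperSet U) →
      IsAntichain (· ⊆ ·) C → C.Finite) ∧
    ¬ ∃ f : ℕ → Set (Fin m → ℕ), (∀ n, IsUpperSet (f n)) ∧ StrictMono f := by
  constructor
  · intro C hC hAC
    by_contra hfin
    have hinf : C.Infinite := hfin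
    let e := hinf.natEmbedding
    obtain ⟨a, b, hab, hsub⟩ := Set.PartiallyWellOrderedOn.exists_lt (upperPWO_pi m) (f := fun n => (e n : Set (Fin m → ℕ)))
      (fun n => hC _ (e n).2)
    have hne : (e b : Set (Fin m → ℕ)) ≠ (e a : Set (Fin m → ℕ)) := by
      intro hEq
      exact hab.ne' (e.injective (Subtype.ext hEq))
    exact hAC (e b).2 (e a).2 hne hsub
  · rintro ⟨f, hup, hsm⟩
    obtain ⟨a, b, hab, hsub⟩ := Set.PartiallyWellOrderedOn.exists_lt (upperPWO_pi m) (f := f) hup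
    exact absurd hsub (hsm hab).not_ge
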